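/- For every integer r ≥ 3 and integers n₁ ≥ n₂ ≥ ⋯ ≥ n_r ≥ 1, every edge-coloring of the complete r-partite graph K_{n₁,n₂,…,n_r} using exactly n₁ + n₂ + ⋯ + n_r colors contains a rainbow 3-cycle or a rainbow 4-cycle. -/

import Mathlib

open Finset

/-- The complete `r`-partite graph with parts of sizes `n 0, n 1, …, n (r-1)`. -/
def Kpartite (r : ℕ) (n : ℕ → ℕ) : SimpleGraph ((i : Fin r) × Fin (n i)) :=
  SimpleGraph.completeMultipartiteGraph fun i : Fin r => Fin (n i)

/-- The edge-coloring `c` contains a rainbow 3-cycle in `G`. -/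
def RainbowC3 {V α : Type*} (G : SimpleGraph V) (c : Sym2 V → α) : Prop :=
  ∃ a b d : V, G.Adj a b ∧ G.Adj b d ∧ G.Adj d a ∧
    c s(a, b) ≠ c s(b, d) ∧ c s(b, d) ≠ c s(d, a) ∧ c s(a, b) ≠ c s(d, a)

/-- The edge-coloring `c` contains a rainbow 4-cycle in `G`. -/
def RainbowC4 {V α : Type*} (G : SimpleGraph V) (c : Sym2 V → α) : Prop :=
  ∃ a b d e : V, G.Adj a b ∧ G.Adj b d ∧ G.Adj d e ∧ G.Adj e a ∧
    a ≠ d ∧ b ≠ e ∧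
    c s(a, b) ≠ c s(b, d) ∧ c s(a, b) ≠ c s(d, e) ∧ c s(a, b) ≠ c s(e, a) ∧
    c s(b, d) ≠ c s(d, e) ∧ c s(b, d) ≠ c s(e, a) ∧ c s(d, e) ≠ c s(e, a)

/-- The coloring `c` uses every one of the `k` colors on at least one edge of `G`
(i.e. it uses exactly `k` colors). -/
def SurjOnEdges {V : Type*} {k : ℕ} (G : SimpleGraph V) (c : Sym2 V → Fin k) : Prop :=
  ∀ i : Fin k, ∃ e ∈ G.edgeSet, c e = i


section CycExist

variable {V : Type*} [Fintype V] [DecidableEq V]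

open Classical in
noncomputable def esupp (E : Finset (Sym2 V)) : Finset V :=
  Finset.univ.filter (fun x => ∃ e ∈ E, x ∈ e)

lemma mem_esupp {E : Finset (Sym2 V)} {x : V} : x ∈ esupp E ↔ ∃ e ∈ E, x ∈ e := by
  simp [esupp]

open Classical in
noncomputable def efilt (E : Finset (Sym2 V)) (x : V) : Finset (Sym2 V) :=
  E.filter (fun e => x ∈ e)

lemma mem_efilt {E : Finset (Sym2 V)} {x : V} {e : Sym2 V} :
    e ∈ efilt E x ↔ e ∈ E ∧ x ∈ e := by simp [efilt]

/-- helper: `a % m` for `a ≤ m`. -/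
lemma mod_helper {a mm : ℕ} (h : a ≤ mm) (h0 : 0 < mm) :
    a % mm = if a = mm then 0 else a := by
  split_ifs with he
  · subst he; exact Nat.mod_self a
  · exact Nat.mod_eq_of_lt (by omega)

/-- In an edge set where every touched vertex has degree ≥ 2, there is a cycle. -/
lemma exists_cyc_of_min_degree (E : Finset (Sym2 V))
    (hdiag : ∀ e ∈ E, ¬ e.IsDiag) (hne : E.Nonempty)
    (hmin : ∀ x ∈ esupp E, 2 ≤ (efilt E x).card) :
    ∃ m, 3 ≤ m ∧ ∃ v : ℕ → V,
      (∀ i j, i < m → j < m → v i = v j → i = j) ∧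
      (∀ i, i < m → s(v i, v ((i + 1) % m)) ∈ E) := by
  have hstep : ∀ x y : V, s(x, y) ∈ E → ∃ z, s(y, z) ∈ E ∧ z ≠ x := by
    intro x y hxy
    have hy : y ∈ esupp E := mem_esupp.mpr ⟨_, hxy, Sym2.mem_mk_right x y⟩
    have h2 := hmin y hy
    obtain ⟨e', he', hne'⟩ := Finset.exists_mem_ne (s := efilt E y) (by omega) s(x, y)
    rw [mem_efilt] at he'
    obtain ⟨z, rfl⟩ := Sym2.mem_iff_exists.mp he'.2
    refine ⟨z, he'.1, ?_⟩
    rintro rfl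
    exact hne' (Sym2.eq_swap)
  -- initial edge
  obtain ⟨e0, he0⟩ := hne
  induction e0 using Sym2.ind with
  | _ a b =>
  -- the sequence of directed edges
  let P := {p : V × V // s(p.1, p.2) ∈ E}
  let step : P → P := fun p =>
    ⟨(p.1.2, Classical.choose (hstep p.1.1 p.1.2 p.2)),
      (Classical.choose_spec (hstep p.1.1 p.1.2 p.2)).1⟩
  let seq : ℕ → P := fun k => Nat.rec ⟨(a, b), he0⟩ (fun _ p => step p) k
  have hseq_succ : ∀ k, seq (k + 1) = step (seq k) := fun k => rfl
  let v : ℕ → V := fun k => (seq k).1.1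
  have hfst : ∀ k, v (k + 1) = (seq k).1.2 := by
    intro k; rw [show v (k+1) = (seq (k+1)).1.1 from rfl, hseq_succ]
  have hE : ∀ k, s(v k, v (k + 1)) ∈ E := by
    intro k; rw [hfst k]; exact (seq k).2
  have hne2 : ∀ k, v (k + 2) ≠ v k := by
    intro k
    have h1 : v (k + 2) = (seq (k+1)).1.2 := hfst (k+1)
    rw [h1, hseq_succ]
    exact (Classical.choose_spec (hstep (seq k).1.1 (seq k).1.2 (seq k).2)).2
  have hne1 : ∀ k, v (k + 1) ≠ v k := by
    intro k h
    exact hdiag _ (hE k) (by rw [Sym2.mk_isDiag_iff]; exact h.symm)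
  -- pigeonhole
  have hrep : ∃ j, ∃ i, i < j ∧ v i = v j := by
    obtain ⟨x, y, hxy, hvxy⟩ := Fintype.exists_ne_map_eq_of_card_lt
      (fun i : Fin (Fintype.card V + 1) => v i) (by simp)
    rcases lt_or_gt_of_ne hxy with h | h
    · exact ⟨y, x, h, hvxy⟩
    · exact ⟨x, y, h, hvxy.symm⟩
  classical
  let j0 := Nat.find hrep
  obtain ⟨i0, hi0, heq⟩ : ∃ i, i < j0 ∧ v i = v j0 := Nat.find_spec hrep
  have hmin0 : ∀ j' < j0, ¬ ∃ i, i < j' ∧ v i = v j' := fun j' h => Nat.find_min hrep h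
  set m := j0 - i0 with hm
  have hm1 : m ≠ 1 := by
    intro h
    have : j0 = i0 + 1 := by omega
    exact hne1 i0 (by rw [← this, heq])
  have hm2 : m ≠ 2 := by
    intro h
    have : j0 = i0 + 2 := by omega
    exact hne2 i0 (by rw [← this, heq])
  have hm3 : 3 ≤ m := by omega
  refine ⟨m, hm3, fun t => v (i0 + t), ?_, ?_⟩
  · intro s t hs ht h
    rcases lt_trichotomy s t with hst | hst | hst
    · exfalso
      exact hmin0 (i0 + t) (by omega) ⟨i0 + s, by omega, h⟩
    · exact hst
    · exfalso
      exact hmin0 (i0 + s) (by omega) ⟨i0 + t, by omega, h.symm⟩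
  · intro t ht
    rcases Nat.lt_or_ge t (m - 1) with h | h
    · rw [mod_helper (by omega) (by omega), if_neg (by omega)]
      exact hE (i0 + t)
    · have ht' : t = m - 1 := by omega
      subst ht'
      rw [mod_helper (by omega) (by omega), if_pos (by omega)]
      show s(v (i0 + (m - 1)), v (i0 + 0)) ∈ E
      have hj : i0 + (m - 1) + 1 = j0 := by omega
      have h2 := hE (i0 + (m - 1))
      rw [hj, ← heq] at h2
      simpa using h2

/-- Any nonempty edge set with at least as many edges as touched vertices contains a cycle. -/
lemma exists_cyc_aux : ∀ (k : ℕ) (E : Finset (Sym2 V)), E.card ≤ k →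
    (∀ e ∈ E, ¬ e.IsDiag) → (esupp E).card ≤ E.card → E.Nonempty →
    ∃ m, 3 ≤ m ∧ ∃ v : ℕ → V,
      (∀ i j, i < m → j < m → v i = v j → i = j) ∧
      (∀ i, i < m → s(v i, v ((i + 1) % m)) ∈ E) := by
  intro k
  induction k with
  | zero =>
    intro E hk _ _ hne
    simp [Nat.le_zero, Finset.card_eq_zero] at hk
    subst hk
    exact absurd hne (by simp)
  | succ k ih =>
    intro E hk hdiag hcard hne
    by_cases hmin : ∀ x ∈ esupp E, 2 ≤ (efilt E x).card
    · exact exists_cyc_of_min_degree E hdiag hne hmin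
    · push_neg at hmin
      obtain ⟨x, hx, hdeg⟩ := hmin
      obtain ⟨e0, he0, hxe0⟩ := mem_esupp.mp hx
      have he0f : e0 ∈ efilt E x := mem_efilt.mpr ⟨he0, hxe0⟩
      have huniq : ∀ e ∈ efilt E x, e = e0 := fun e he =>
        Finset.card_le_one.mp (by omega) e he e0 he0f
      set E' := E.erase e0 with hE'
      -- supp of E' avoids x
      have hsub : esupp E' ⊆ (esupp E).erase x := by
        intro y hy
        obtain ⟨e, he, hye⟩ := mem_esupp.mp hy
        have heE : e ∈ E := Finset.mem_of_mem_erase he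
        refine Finset.mem_erase.mpr ⟨?_, mem_esupp.mpr ⟨e, heE, hye⟩⟩
        rintro rfl
        exact (Finset.ne_of_mem_erase he) (huniq e (mem_efilt.mpr ⟨heE, hye⟩))
      -- two vertices in esupp E
      obtain ⟨y, rfl⟩ := Sym2.mem_iff_exists.mp hxe0
      have hxy : x ≠ y := fun h => hdiag _ he0 (by rw [Sym2.mk_isDiag_iff]; exact h)
      have hyE : y ∈ esupp E := mem_esupp.mpr ⟨_, he0, Sym2.mem_mk_right x y⟩
      have h2supp : 2 ≤ (esupp E).card :=
        Finset.one_lt_card.mpr ⟨x, hx, y, hyE, hxy⟩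
      have hE'card : E'.card = E.card - 1 := Finset.card_erase_of_mem he0
      have hne' : E'.Nonempty := Finset.card_pos.mp (by omega)
      have hcard' : (esupp E').card ≤ E'.card := by
        have h1 : (esupp E').card ≤ ((esupp E).erase x).card := Finset.card_le_card hsub
        have h2 : ((esupp E).erase x).card = (esupp E).card - 1 := Finset.card_erase_of_mem hx
        omega
      obtain ⟨m, hm, v, hinj, hmem⟩ := ih E' (by omega) (fun e he => hdiag e (Finset.mem_of_mem_erase he)) hcard' hne'
      exact ⟨m, hm, v, hinj, fun i hi => Finset.mem_of_mem_erase (hmem i hi)⟩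

lemma exists_cycSeq (E : Finset (Sym2 V)) (hdiag : ∀ e ∈ E, ¬ e.IsDiag)
    (hcard : Fintype.card V ≤ E.card) (hne : E.Nonempty) :
    ∃ m, 3 ≤ m ∧ ∃ v : ℕ → V,
      (∀ i j, i < m → j < m → v i = v j → i = j) ∧
      (∀ i, i < m → s(v i, v ((i + 1) % m)) ∈ E) :=
  exists_cyc_aux E.card E le_rfl hdiag (le_trans (le_trans (Finset.card_le_univ _) (by simp)) hcard) hne

end CycExist

section RainbowCycles

variable {V α : Type*}

/-- A rainbow cycle of length `m` in `G` under coloring `c`, encoded as a cyclic sequence. -/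
def IsRC (G : SimpleGraph V) (c : Sym2 V → α) (m : ℕ) : Prop :=
  3 ≤ m ∧ ∃ v : ℕ → V,
    (∀ i j, i < m → j < m → v i = v j → i = j) ∧
    (∀ i, i < m → G.Adj (v i) (v ((i + 1) % m))) ∧
    (∀ i j, i < m → j < m →
      c s(v i, v ((i + 1) % m)) = c s(v j, v ((j + 1) % m)) → i = j)

/-- Edges of an injective cyclic sequence determine their index. -/
lemma edge_index_eq {m : ℕ} (hm : 3 ≤ m) (v : ℕ → V)
    (hinj : ∀ i j, i < m → j < m → v i = v j → i = j) {i j : ℕ}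
    (hi : i < m) (hj : j < m)
    (he : s(v i, v ((i + 1) % m)) = s(v j, v ((j + 1) % m))) : i = j := by
  have hi' : (i + 1) % m < m := Nat.mod_lt _ (by omega)
  have hj' : (j + 1) % m < m := Nat.mod_lt _ (by omega)
  rw [Sym2.eq_iff] at he
  rcases he with ⟨h1, _⟩ | ⟨h1, h2⟩
  · exact hinj i j hi hj h1
  · have e1 : i = (j + 1) % m := hinj _ _ hi hj' h1
    have e2 : (i + 1) % m = j := hinj _ _ hi' hj h2
    rw [mod_helper (by omega) (by omega)] at e1
    rw [mod_helper (by omega) (by omega)] at e2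
    split_ifs at e1 e2 <;> omega

/-- A rainbow path `v 0, …, v k` closed up by a chord of a fresh color is a rainbow cycle. -/
lemma rc_of_arc (G : SimpleGraph V) (c : Sym2 V → α) (k : ℕ) (hk2 : 2 ≤ k) (v : ℕ → V)
    (hinj : ∀ i j, i ≤ k → j ≤ k → v i = v j → i = j)
    (hadj : ∀ i, i < k → G.Adj (v i) (v (i + 1)))
    (hchord : G.Adj (v k) (v 0))
    (hcinj : ∀ i j, i < k → j < k → c s(v i, v (i + 1)) = c s(v j, v (j + 1)) → i = j)
    (hc0 : ∀ j, j < k → c s(v j, v (j + 1)) ≠ c s(v k, v 0)) :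
    IsRC G c (k + 1) := by
  refine ⟨by omega, v, fun i j hi hj h => hinj i j (by omega) (by omega) h, ?_, ?_⟩
  · intro i hi
    rw [mod_helper (by omega) (by omega)]
    split_ifs with h
    · have hik : i = k := by omega
      subst hik; exact hchord
    · exact hadj i (by omega)
  · intro i j hi hj h
    have hmi := mod_helper (a := i + 1) (mm := k + 1) (by omega) (by omega)
    have hmj := mod_helper (a := j + 1) (mm := k + 1) (by omega) (by omega)
    rcases Nat.lt_or_ge i k with hik | hik <;> rcases Nat.lt_or_ge j k with hjk | hjk
    · rw [hmi, if_neg (by omega), hmj, if_neg (by omega)] at h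
      exact hcinj i j hik hjk h
    · have hj' : j = k := by omega
      subst hj'
      rw [hmi, if_neg (by omega), hmj, if_pos rfl] at h
      exact absurd h (hc0 i hik)
    · have hi' : i = k := by omega
      subst hi'
      rw [hmi, if_pos rfl, hmj, if_neg (by omega)] at h
      exact absurd h.symm (hc0 j hjk)
    · omega

/-- A chord in a rainbow cycle produces a strictly shorter rainbow cycle. -/
lemma splice (G : SimpleGraph V) (c : Sym2 V → α) (m k : ℕ) (hm : 3 ≤ m)
    (hk2 : 2 ≤ k) (hkm : k + 2 ≤ m) (v : ℕ → V)
    (hinj : ∀ i j, i < m → j < m → v i = v j → i = j)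
    (hadj : ∀ i, i < m → G.Adj (v i) (v ((i + 1) % m)))
    (hcol : ∀ i j, i < m → j < m →
      c s(v i, v ((i + 1) % m)) = c s(v j, v ((j + 1) % m)) → i = j)
    (hchord : G.Adj (v 0) (v k)) :
    ∃ m', IsRC G c m' ∧ m' < m := by
  have hmod : ∀ j : ℕ, j + 1 < m → (j + 1) % m = j + 1 := fun j h => Nat.mod_eq_of_lt h
  by_cases hcase : ∀ j, j < k → c s(v j, v (j + 1)) ≠ c s(v 0, v k)
  · refine ⟨k + 1, rc_of_arc G c k hk2 v
      (fun i j hi hj h => hinj i j (by omega) (by omega) h) ?_ hchord.symm ?_ ?_, by omega⟩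
    · intro i hi
      have := hadj i (by omega)
      rwa [hmod i (by omega)] at this
    · intro i j hi hj h
      refine hcol i j (by omega) (by omega) ?_
      rwa [hmod i (by omega), hmod j (by omega)]
    · intro j hj
      rw [show s(v k, v 0) = s(v 0, v k) from Sym2.eq_swap]
      exact hcase j hj
  · push_neg at hcase
    obtain ⟨j1, hj1k, hj1c⟩ := hcase
    set k' := m - k with hk'
    refine ⟨k' + 1, rc_of_arc G c k' (by omega) (fun i => v ((k + i) % m)) ?_ ?_ ?_ ?_ ?_,
      by omega⟩
    · intro i j hi hj h
      have h1 : (k + i) % m < m := Nat.mod_lt _ (by omega)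
      have h2 : (k + j) % m < m := Nat.mod_lt _ (by omega)
      have := hinj _ _ h1 h2 h
      rw [mod_helper (by omega) (by omega), mod_helper (by omega) (by omega)] at this
      split_ifs at this <;> omega
    · intro i hi
      have h1 : (k + i) % m = k + i := Nat.mod_eq_of_lt (by omega)
      have := hadj (k + i) (by omega)
      rw [show k + (i + 1) = (k + i) + 1 from rfl, h1]
      exact this
    · -- chord : Adj (v ((k + k') % m)) (v ((k + 0) % m))
      rw [show k + k' = m by omega, Nat.mod_self, show (k + 0) % m = k from Nat.mod_eq_of_lt (by omega)]
      exact hchord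
    · intro i j hi hj h
      have h1 : (k + i) % m = k + i := Nat.mod_eq_of_lt (by omega)
      have h2 : (k + j) % m = k + j := Nat.mod_eq_of_lt (by omega)
      rw [show k + (i + 1) = (k + i) + 1 from rfl, show k + (j + 1) = (k + j) + 1 from rfl,
        h1, h2] at h
      have := hcol (k + i) (k + j) (by omega) (by omega) h
      omega
    · intro j hj h
      -- h : c s(v ((k+j)%m), v ((k+(j+1))%m)) = c s(v ((k+k')%m), v ((k+0)%m))
      rw [show k + k' = m by omega, Nat.mod_self,
        show (k + 0) % m = k from Nat.mod_eq_of_lt (by omega)] at h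
      have h1 : (k + j) % m = k + j := Nat.mod_eq_of_lt (by omega)
      rw [show k + (j + 1) = (k + j) + 1 from rfl, h1] at h
      have hj1m : (j1 + 1) % m = j1 + 1 := hmod j1 (by omega)
      have heq2 : c s(v (k + j), v ((k + j + 1) % m)) = c s(v j1, v ((j1 + 1) % m)) := by
        rw [hj1m]; exact h.trans hj1c.symm
      have := hcol (k + j) j1 (by omega) (by omega) heq2
      omega

/-- Rotating a rainbow cycle by one. -/
lemma shift_one (G : SimpleGraph V) (c : Sym2 V → α) (m : ℕ) (hm : 3 ≤ m) (v : ℕ → V)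
    (hinj : ∀ i j, i < m → j < m → v i = v j → i = j)
    (hadj : ∀ i, i < m → G.Adj (v i) (v ((i + 1) % m)))
    (hcol : ∀ i j, i < m → j < m →
      c s(v i, v ((i + 1) % m)) = c s(v j, v ((j + 1) % m)) → i = j) :
    (∀ i j, i < m → j < m → v ((i + 1) % m) = v ((j + 1) % m) → i = j) ∧
    (∀ i, i < m → G.Adj (v ((i + 1) % m)) (v ((((i + 1) % m) + 1) % m))) ∧
    (∀ i j, i < m → j < m →
      c s(v ((i + 1) % m), v ((((i + 1) % m) + 1) % m)) =
        c s(v ((j + 1) % m), v ((((j + 1) % m) + 1) % m)) → i = j) := by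
  have hlt : ∀ i : ℕ, (i + 1) % m < m := fun i => Nat.mod_lt _ (by omega)
  refine ⟨?_, ?_, ?_⟩
  · intro i j hi hj h
    have := hinj _ _ (hlt i) (hlt j) h
    rw [mod_helper (by omega) (by omega), mod_helper (by omega) (by omega)] at this
    split_ifs at this <;> omega
  · intro i hi
    exact hadj _ (hlt i)
  · intro i j hi hj h
    have := hcol _ _ (hlt i) (hlt j) h
    rw [mod_helper (by omega) (by omega), mod_helper (by omega) (by omega)] at this
    split_ifs at this <;> omega

end RainbowCycles

lemma Kpartite_adj {r : ℕ} {n : ℕ → ℕ} {a b : (i : Fin r) × Fin (n i)} :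
    (Kpartite r n).Adj a b ↔ a.1 ≠ b.1 := Iff.rfl


/-- Every edge-coloring of `K_{n₁,…,n_r}` with exactly `n₁+⋯+n_r` colors contains a
rainbow `C₃` or a rainbow `C₄`. -/
theorem rainbow_C3_or_C4_of_many_colors (r : ℕ) (n : ℕ → ℕ) (hr : 3 ≤ r)
    (hmono : ∀ i j : ℕ, i ≤ j → j < r → n j ≤ n i)
    (hpos : ∀ i : ℕ, i < r → 1 ≤ n i)
    (c : Sym2 ((i : Fin r) × Fin (n i)) → Fin (∑ i ∈ Finset.range r, n i))
    (hc : SurjOnEdges (Kpartite r n) c) :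
    RainbowC3 (Kpartite r n) c ∨ RainbowC4 (Kpartite r n) c := by
  classical
  have hN : 3 ≤ ∑ i ∈ Finset.range r, n i := by
    calc (3 : ℕ) ≤ r := hr
    _ = ∑ _i ∈ Finset.range r, 1 := by simp
    _ ≤ _ := Finset.sum_le_sum (fun i hi => hpos i (Finset.mem_range.mp hi))
  choose f hf1 hf2 using hc
  have hfinj : Function.Injective f := fun a b h => by rw [← hf2 a, ← hf2 b, h]
  set E : Finset (Sym2 ((i : Fin r) × Fin (n i))) := Finset.univ.image f with hE
  have hEcard : E.card = ∑ i ∈ Finset.range r, n i := by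
    rw [hE, Finset.card_image_of_injective _ hfinj, Finset.card_univ, Fintype.card_fin]
  have hdiag : ∀ e ∈ E, ¬ e.IsDiag := by
    intro e he
    obtain ⟨i, _, rfl⟩ := Finset.mem_image.mp he
    exact (Kpartite r n).not_isDiag_of_mem_edgeSet (hf1 i)
  have hcardV : Fintype.card ((i : Fin r) × Fin (n i)) ≤ E.card := by
    rw [hEcard]
    apply le_of_eq
    rw [Fintype.card_sigma]
    simp only [Fintype.card_fin]
    exact Fin.sum_univ_eq_sum_range n r
  have hEne : E.Nonempty :=
    ⟨f ⟨0, by omega⟩, Finset.mem_image_of_mem f (Finset.mem_univ _)⟩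
  obtain ⟨m, hm3, v, hinj, hmem⟩ := exists_cycSeq E hdiag hcardV hEne
  have hexRC : ∃ m, IsRC (Kpartite r n) c m := by
    refine ⟨m, hm3, v, hinj, ?_, ?_⟩
    · intro i hi
      obtain ⟨a, _, ha⟩ := Finset.mem_image.mp (hmem i hi)
      rw [← SimpleGraph.mem_edgeSet, ← ha]
      exact hf1 a
    · intro i j hi hj hcc
      obtain ⟨a, _, ha⟩ := Finset.mem_image.mp (hmem i hi)
      obtain ⟨b, _, hb⟩ := Finset.mem_image.mp (hmem j hj)
      have hab : a = b := by rw [← hf2 a, ← hf2 b, ha, hb]; exact hcc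
      exact edge_index_eq hm3 v hinj hi hj (by rw [← ha, ← hb, hab])
  have hspec := Nat.find_spec hexRC
  set m0 := Nat.find hexRC with hm0def
  obtain ⟨hm03, w, hwinj, hwadj, hwcol⟩ := hspec
  rcases (by omega : m0 = 3 ∨ m0 = 4 ∨ 5 ≤ m0) with h3 | h4 | h5
  · left
    rw [h3] at hwinj hwadj hwcol
    have e0 := hwadj 0 (by omega)
    have e1 := hwadj 1 (by omega)
    have e2 := hwadj 2 (by omega)
    norm_num at e0 e1 e2
    refine ⟨w 0, w 1, w 2, e0, e1, e2, ?_, ?_, ?_⟩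
    · intro hcc
      have : (0 : ℕ) = 1 := hwcol 0 1 (by omega) (by omega) (by norm_num; exact hcc)
      omega
    · intro hcc
      have : (1 : ℕ) = 2 := hwcol 1 2 (by omega) (by omega) (by norm_num; exact hcc)
      omega
    · intro hcc
      have : (0 : ℕ) = 2 := hwcol 0 2 (by omega) (by omega) (by norm_num; exact hcc)
      omega
  · right
    rw [h4] at hwinj hwadj hwcol
    have e0 := hwadj 0 (by omega)
    have e1 := hwadj 1 (by omega)
    have e2 := hwadj 2 (by omega)
    have e3 := hwadj 3 (by omega)
    norm_num at e0 e1 e2 e3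
    refine ⟨w 0, w 1, w 2, w 3, e0, e1, e2, e3, ?_, ?_, ?_, ?_, ?_, ?_, ?_, ?_⟩
    · intro hcc
      have : (0 : ℕ) = 2 := hwinj 0 2 (by omega) (by omega) hcc
      omega
    · intro hcc
      have : (1 : ℕ) = 3 := hwinj 1 3 (by omega) (by omega) hcc
      omega
    · intro hcc
      have : (0 : ℕ) = 1 := hwcol 0 1 (by omega) (by omega) (by norm_num; exact hcc)
      omega
    · intro hcc
      have : (0 : ℕ) = 2 := hwcol 0 2 (by omega) (by omega) (by norm_num; exact hcc)
      omega
    · intro hcc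
      have : (0 : ℕ) = 3 := hwcol 0 3 (by omega) (by omega) (by norm_num; exact hcc)
      omega
    · intro hcc
      have : (1 : ℕ) = 2 := hwcol 1 2 (by omega) (by omega) (by norm_num; exact hcc)
      omega
    · intro hcc
      have : (1 : ℕ) = 3 := hwcol 1 3 (by omega) (by omega) (by norm_num; exact hcc)
      omega
    · intro hcc
      have : (2 : ℕ) = 3 := hwcol 2 3 (by omega) (by omega) (by norm_num; exact hcc)
      omega
  · exfalso
    have hnochord : ∀ k, 2 ≤ k → k + 2 ≤ m0 → ¬ (Kpartite r n).Adj (w 0) (w k) := by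
      intro k hk2 hkm hadj
      obtain ⟨m', hRC, hlt⟩ :=
        splice (Kpartite r n) c m0 k (by omega) hk2 hkm w hwinj hwadj hwcol hadj
      have := Nat.find_min' hexRC hRC
      omega
    have h03 : (w 0).1 = (w 3).1 := by
      by_contra hne
      exact hnochord 3 (by omega) (by omega) (Kpartite_adj.mpr hne)
    obtain ⟨hsinj, hsadj, hscol⟩ :=
      shift_one (Kpartite r n) c m0 (by omega) w hwinj hwadj hwcol
    have h13 : (w 1).1 = (w 3).1 := by
      by_contra hne
      have hadj' : (Kpartite r n).Adj (w ((0 + 1) % m0)) (w ((2 + 1) % m0)) := by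
        rw [Nat.mod_eq_of_lt (by omega : (0:ℕ) + 1 < m0),
          Nat.mod_eq_of_lt (by omega : (2:ℕ) + 1 < m0)]
        exact Kpartite_adj.mpr hne
      obtain ⟨m', hRC, hlt⟩ :=
        splice (Kpartite r n) c m0 2 (by omega) (by omega) (by omega)
          (fun i => w ((i + 1) % m0)) hsinj hsadj hscol hadj'
      have := Nat.find_min' hexRC hRC
      omega
    have h01 : (Kpartite r n).Adj (w 0) (w 1) := by
      have := hwadj 0 (by omega)
      rwa [Nat.mod_eq_of_lt (by omega : (0:ℕ) + 1 < m0)] at this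
    exact Kpartite_adj.mp h01 (h03.trans h13.symm)
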